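/- Let (Ω, F, P) be a probability space and let φ, Y, η, ζ be square-integrable real random variables. Define M : ℝ² → ℝ by M(λ₁, λ₂) = E[(φ − φ̃ − λ₁ η)(Y − m − λ₂ ζ)], where φ̃ = E[φ|H] and m = E[Y|H] for a sub-σ-algebra H ⊆ F, and suppose η and ζ are H-measurable. Then M is well-defined (the integrand is integrable for every λ), M is differentiable at λ = 0, and its gradient at 0 is (E[η (Y − m)], −E[(φ − φ̃) ζ]) = (0, 0). -/

import Mathlib

open MeasureTheory

private lemma mul_integrable' {Ω : Type*} {F : MeasurableSpace Ω} {μ : Measure Ω}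
    {f g : Ω → ℝ} (hf : MemLp f 2 μ) (hg : MemLp g 2 μ) :
    Integrable (fun ω => f ω * g ω) μ := by
  have h : MemLp (f • g) 1 μ := hg.smul hf (p := 2) (q := 2) (r := 1)
  exact (memLp_one_iff_integrable.mp h).congr (Filter.Eventually.of_forall fun ω => rfl)

private lemma memLp_two_condexp' {Ω : Type*} {H : MeasurableSpace Ω} {F : MeasurableSpace Ω}
    {μ : Measure Ω} [IsProbabilityMeasure μ] (hHF : H ≤ F)
    {f : Ω → ℝ} (hf : MemLp f 2 μ) : MemLp (μ[f|H]) 2 μ := by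
  haveI : SigmaFinite (μ.trim hHF) := by
    have : IsFiniteMeasure (μ.trim hHF) := isFiniteMeasure_trim hHF
    infer_instance
  set g := condExpL2 ℝ ℝ hHF (hf.toLp f) with hg
  have hgmem : MemLp (g : Ω → ℝ) 2 μ := Lp.memLp (g : Lp ℝ 2 μ)
  have hg1 : Integrable (g : Ω → ℝ) μ :=
    memLp_one_iff_integrable.mp (hgmem.mono_exponent (by norm_num))
  have heq : (g : Ω → ℝ) =ᵐ[μ] μ[f|H] := by
    refine ae_eq_condExp_of_forall_setIntegral_eq hHF (hf.integrable one_le_two)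
      (fun s _ _ => hg1.integrableOn) (fun s hs hμs => ?_)
      (lpMeas.aestronglyMeasurable g)
    rw [integral_condExpL2_eq hHF (hf.toLp f) hs hμs.ne]
    exact setIntegral_congr_ae (hHF s hs) ((hf.coeFn_toLp).mono fun x hx _ => hx)
  exact hgmem.ae_eq heq

private lemma orth' {Ω : Type*} {H : MeasurableSpace Ω} {F : MeasurableSpace Ω}
    {μ : Measure Ω} [IsProbabilityMeasure μ] (hHF : H ≤ F)
    {f g : Ω → ℝ} (hf : MemLp f 2 μ) (hg : MemLp g 2 μ)
    (hgH : StronglyMeasurable[H] g) :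
    ∫ ω, g ω * (f ω - (μ[f|H]) ω) ∂μ = 0 := by
  haveI : SigmaFinite (μ.trim hHF) := by
    have : IsFiniteMeasure (μ.trim hHF) := isFiniteMeasure_trim hHF
    infer_instance
  set d : Ω → ℝ := fun ω => f ω - (μ[f|H]) ω with hd
  have hdL : MemLp d 2 μ := hf.sub (memLp_two_condexp' hHF hf)
  have hdint : Integrable d μ := (hf.integrable one_le_two).sub integrable_condExp
  have hgd : Integrable (g * d) μ := (mul_integrable' hg hdL).congr
    (Filter.Eventually.of_forall fun ω => rfl)
  have hd0 : μ[d|H] =ᵐ[μ] 0 := by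
    have h1 : μ[d|H] =ᵐ[μ] μ[f|H] - μ[μ[f|H]|H] :=
      condExp_sub (hf.integrable one_le_two) integrable_condExp H
    have h2 : μ[μ[f|H]|H] = μ[f|H] :=
      condExp_of_stronglyMeasurable hHF stronglyMeasurable_condExp integrable_condExp
    refine h1.trans ?_
    rw [h2]
    simp
  have hmul : μ[g * d|H] =ᵐ[μ] g * μ[d|H] :=
    condExp_mul_of_stronglyMeasurable_left hgH hgd hdint
  have hzero : μ[g * d|H] =ᵐ[μ] 0 := hmul.trans (by
    filter_upwards [hd0] with ω hω
    simp [hω])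
  calc ∫ ω, g ω * d ω ∂μ = ∫ ω, (μ[g * d|H]) ω ∂μ := (integral_condExp hHF).symm
    _ = ∫ ω, (0 : Ω → ℝ) ω ∂μ := integral_congr_ae hzero
    _ = 0 := by simp

/-- Neyman orthogonality of the orthogonalized moment condition. -/
theorem stmt_5 {Ω : Type*} {F : MeasurableSpace Ω} {μ : Measure Ω} [IsProbabilityMeasure μ]
    {H : MeasurableSpace Ω} (hHF : H ≤ F)
    {φ Y η ζ : Ω → ℝ} (hφ : MemLp φ 2 μ) (hY : MemLp Y 2 μ)
    (hη : MemLp η 2 μ) (hζ : MemLp ζ 2 μ)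
    (hηH : StronglyMeasurable[H] η) (hζH : StronglyMeasurable[H] ζ)
    (M : ℝ × ℝ → ℝ)
    (hM : ∀ l : ℝ × ℝ, M l =
      ∫ ω, (φ ω - (μ[φ|H]) ω - l.1 * η ω) * (Y ω - (μ[Y|H]) ω - l.2 * ζ ω) ∂μ) :
    (∀ l : ℝ × ℝ, Integrable
        (fun ω => (φ ω - (μ[φ|H]) ω - l.1 * η ω) * (Y ω - (μ[Y|H]) ω - l.2 * ζ ω)) μ) ∧
    HasFDerivAt M (0 : ℝ × ℝ →L[ℝ] ℝ) (0, 0) ∧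
    ∫ ω, η ω * (Y ω - (μ[Y|H]) ω) ∂μ = 0 ∧
    ∫ ω, (φ ω - (μ[φ|H]) ω) * ζ ω ∂μ = 0 := by
  have ha : MemLp (fun ω => φ ω - (μ[φ|H]) ω) 2 μ := hφ.sub (memLp_two_condexp' hHF hφ)
  have hb : MemLp (fun ω => Y ω - (μ[Y|H]) ω) 2 μ := hY.sub (memLp_two_condexp' hHF hY)
  have Iab : Integrable (fun ω => (φ ω - (μ[φ|H]) ω) * (Y ω - (μ[Y|H]) ω)) μ :=
    mul_integrable' ha hb
  have Iaz : Integrable (fun ω => (φ ω - (μ[φ|H]) ω) * ζ ω) μ := mul_integrable' ha hζ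
  have Ieb : Integrable (fun ω => η ω * (Y ω - (μ[Y|H]) ω)) μ := mul_integrable' hη hb
  have Iez : Integrable (fun ω => η ω * ζ ω) μ := mul_integrable' hη hζ
  have horth1 : ∫ ω, η ω * (Y ω - (μ[Y|H]) ω) ∂μ = 0 := orth' hHF hY hη hηH
  have horth2 : ∫ ω, (φ ω - (μ[φ|H]) ω) * ζ ω ∂μ = 0 := by
    rw [show (fun ω => (φ ω - (μ[φ|H]) ω) * ζ ω) = fun ω => ζ ω * (φ ω - (μ[φ|H]) ω) from
      funext fun ω => mul_comm _ _]
    exact orth' hHF hφ hζ hζH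
  have hint : ∀ l : ℝ × ℝ, Integrable
      (fun ω => (φ ω - (μ[φ|H]) ω - l.1 * η ω) * (Y ω - (μ[Y|H]) ω - l.2 * ζ ω)) μ := by
    intro l
    have : Integrable (fun ω =>
        (φ ω - (μ[φ|H]) ω) * (Y ω - (μ[Y|H]) ω)
        - l.2 * ((φ ω - (μ[φ|H]) ω) * ζ ω)
        - l.1 * (η ω * (Y ω - (μ[Y|H]) ω))
        + (l.1 * l.2) * (η ω * ζ ω)) μ :=
      ((Iab.sub (Iaz.const_mul l.2)).sub (Ieb.const_mul l.1)).add (Iez.const_mul (l.1 * l.2))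
    exact this.congr (Filter.Eventually.of_forall fun ω => by ring)
  refine ⟨hint, ?_, horth1, horth2⟩
  set A : ℝ := ∫ ω, (φ ω - (μ[φ|H]) ω) * (Y ω - (μ[Y|H]) ω) ∂μ with hA
  set D : ℝ := ∫ ω, η ω * ζ ω ∂μ with hD
  have hMval : ∀ l : ℝ × ℝ, M l = A + D * (l.1 * l.2) := by
    intro l
    rw [hM l]
    have hre : ∀ ω, (φ ω - (μ[φ|H]) ω - l.1 * η ω) * (Y ω - (μ[Y|H]) ω - l.2 * ζ ω) =
        (φ ω - (μ[φ|H]) ω) * (Y ω - (μ[Y|H]) ω)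
        - l.2 * ((φ ω - (μ[φ|H]) ω) * ζ ω)
        - l.1 * (η ω * (Y ω - (μ[Y|H]) ω))
        + (l.1 * l.2) * (η ω * ζ ω) := fun ω => by ring
    rw [integral_congr_ae (Filter.Eventually.of_forall hre)]
    have Ia : Integrable (fun ω => (φ ω - (μ[φ|H]) ω) * (Y ω - (μ[Y|H]) ω)
        - l.2 * ((φ ω - (μ[φ|H]) ω) * ζ ω)) μ := Iab.sub (Iaz.const_mul l.2)
    have Ib : Integrable (fun ω => (φ ω - (μ[φ|H]) ω) * (Y ω - (μ[Y|H]) ω)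
        - l.2 * ((φ ω - (μ[φ|H]) ω) * ζ ω) - l.1 * (η ω * (Y ω - (μ[Y|H]) ω))) μ :=
      Ia.sub (Ieb.const_mul l.1)
    rw [integral_add Ib (Iez.const_mul (l.1 * l.2)),
      integral_sub Ia (Ieb.const_mul l.1),
      integral_sub Iab (Iaz.const_mul l.2),
      integral_const_mul, integral_const_mul, integral_const_mul,
      horth1, horth2, ← hA, ← hD]
    ring
  have hMeq : M = fun l : ℝ × ℝ => A + D * (l.1 * l.2) := funext hMval
  rw [hMeq]
  have h1 : HasFDerivAt (fun l : ℝ × ℝ => l.1 * l.2)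
      ((0 : ℝ × ℝ).1 • ContinuousLinearMap.snd ℝ ℝ ℝ
        + (0 : ℝ × ℝ).2 • ContinuousLinearMap.fst ℝ ℝ ℝ) ((0 : ℝ), (0 : ℝ)) :=
    (hasFDerivAt_fst (p := ((0 : ℝ), (0 : ℝ)))).mul (hasFDerivAt_snd)
  have h2 := (h1.const_mul D).const_add A
  exact h2.congr_fderiv (by simp)
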